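/- Suppose x = x_1 x_2 ⋯ x_n and y = y_1 y_2 ⋯ y_n are decompositions of the strings x and y into n consecutive substrings such that there exists a best possible match between x and y in which every term of x_i that is matched with some term of y is matched with a term of y_i (for each i = 1, …, n). Then f̄(x, y) = Σ_{i=1}^{n} f̄(x_i, y_i)·v_i, where v_i = (|x_i| + |y_i|)/(|x| + |y|). -/

import Mathlib

open MeasureTheory

namespace Paper

variable {σ : Type*}

/-- The concatenation of `t` copies of the string `w`. -/
def rep (w : List σ) (t : ℕ) : List σ := (List.replicate t w).flatten

/-- `I` is a match between the strings `a` and `b` (with 0-based indices):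
a collection of pairs of indices, strictly increasing in both coordinates,
pairing equal symbols. -/
def IsMatch (a b : List σ) (I : List (ℕ × ℕ)) : Prop :=
  I.Chain' (fun p q => p.1 < q.1 ∧ p.2 < q.2) ∧
  ∀ p ∈ I, p.1 < a.length ∧ p.2 < b.length ∧ a[p.1]? = b[p.2]?

/-- The largest cardinality of a match between `a` and `b`. -/
noncomputable def maxMatch (a b : List σ) : ℕ :=
  sSup {r | ∃ I, IsMatch a b I ∧ I.length = r}

/-- The `f̄` distance between two strings. -/
noncomputable def fbar (a b : List σ) : ℝ :=
  1 - 2 * (maxMatch a b : ℝ) / (a.length + b.length)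

/-- `I` is an approximate match between the strings `a` and `b` (0-based indices):
pairs of indices, nondecreasing in each coordinate and strictly increasing as pairs,
pairing equal symbols, such that the set of indices paired with any given index is
contained in a set of three consecutive indices. -/
def IsApproxMatch (a b : List σ) (I : List (ℕ × ℕ)) : Prop :=
  I.Chain' (fun p q => p.1 ≤ q.1 ∧ p.2 ≤ q.2 ∧ p ≠ q) ∧
  (∀ p ∈ I, p.1 < a.length ∧ p.2 < b.length ∧ a[p.1]? = b[p.2]?) ∧
  (∀ p ∈ I, (∃ s, ∀ q ∈ I, q.1 = p.1 → q.2 ∈ ({s, s+1, s+2} : Set ℕ)) ∧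
            (∃ t, ∀ q ∈ I, q.2 = p.2 → q.1 ∈ ({t, t+1, t+2} : Set ℕ)))

/-- The largest cardinality of an approximate match between `a` and `b`. -/
noncomputable def maxApproxMatch (a b : List σ) : ℕ :=
  sSup {r | ∃ I, IsApproxMatch a b I ∧ I.length = r}

/-- The approximate distance `f̃` between two strings. -/
noncomputable def ftilde (a b : List σ) : ℝ :=
  max 0 (1 - 2 * (maxApproxMatch a b : ℝ) / (a.length + b.length))

instance : IsTrans (ℕ × ℕ) (fun p q => p.1 < q.1 ∧ p.2 < q.2) :=
  ⟨fun _ _ _ h1 h2 => ⟨h1.1.trans h2.1, h1.2.trans h2.2⟩⟩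

lemma IsMatch.pairwise {a b : List σ} {I : List (ℕ × ℕ)} (h : IsMatch a b I) :
    I.Pairwise (fun p q => p.1 < q.1 ∧ p.2 < q.2) :=
  List.isChain_iff_pairwise.mp h.1

lemma isMatch_of_pairwise {a b : List σ} {I : List (ℕ × ℕ)}
    (h1 : I.Pairwise (fun p q => p.1 < q.1 ∧ p.2 < q.2))
    (h2 : ∀ p ∈ I, p.1 < a.length ∧ p.2 < b.length ∧ a[p.1]? = b[p.2]?) :
    IsMatch a b I :=
  ⟨List.isChain_iff_pairwise.mpr h1, h2⟩

lemma IsMatch.length_le {a b : List σ} {I : List (ℕ × ℕ)} (h : IsMatch a b I) :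
    I.length ≤ a.length := by
  have hpw : (I.map Prod.fst).Pairwise (· < ·) := by
    rw [List.pairwise_map]
    exact h.pairwise.imp (fun hpq => hpq.1)
  have hnd : (I.map Prod.fst).Nodup := hpw.imp ne_of_lt
  have hsub : (I.map Prod.fst).toFinset ⊆ Finset.range a.length := by
    intro i hi
    rw [List.mem_toFinset, List.mem_map] at hi
    obtain ⟨p, hp, rfl⟩ := hi
    exact Finset.mem_range.mpr (h.2 p hp).1
  calc I.length = (I.map Prod.fst).length := (List.length_map _).symm
    _ = (I.map Prod.fst).toFinset.card := (List.toFinset_card_of_nodup hnd).symm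
    _ ≤ a.length := by simpa using Finset.card_le_card hsub

lemma matchSet_bdd (a b : List σ) : BddAbove {r | ∃ I, IsMatch a b I ∧ I.length = r} :=
  ⟨a.length, fun r ⟨I, hI, hr⟩ => hr ▸ hI.length_le⟩

lemma matchSet_nonempty (a b : List σ) : {r | ∃ I, IsMatch a b I ∧ I.length = r}.Nonempty :=
  ⟨0, [], ⟨List.isChain_nil, fun p hp => absurd hp List.not_mem_nil⟩, rfl⟩

lemma IsMatch.le_maxMatch {a b : List σ} {I : List (ℕ × ℕ)} (h : IsMatch a b I) :
    I.length ≤ maxMatch a b :=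
  le_csSup (matchSet_bdd a b) ⟨I, h, rfl⟩

lemma maxMatch_spec (a b : List σ) : ∃ I, IsMatch a b I ∧ I.length = maxMatch a b :=
  Nat.sSup_mem (matchSet_nonempty a b) (matchSet_bdd a b)

lemma maxMatch_nil_left (b : List σ) : maxMatch ([] : List σ) b = 0 := by
  obtain ⟨I, hI, hlen⟩ := maxMatch_spec ([] : List σ) b
  have := hI.length_le
  simp only [List.length_nil, Nat.le_zero] at this
  omega

lemma maxMatch_append (a b c d : List σ) :
    maxMatch a b + maxMatch c d ≤ maxMatch (a ++ c) (b ++ d) := by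
  obtain ⟨I, hI, hIlen⟩ := maxMatch_spec a b
  obtain ⟨J, hJ, hJlen⟩ := maxMatch_spec c d
  set J' := J.map (fun p => (p.1 + a.length, p.2 + b.length)) with hJ'
  have hmem : ∀ p ∈ I ++ J',
      p.1 < (a ++ c).length ∧ p.2 < (b ++ d).length ∧ (a ++ c)[p.1]? = (b ++ d)[p.2]? := by
    intro p hp
    rw [List.mem_append] at hp
    rcases hp with hp | hp
    · obtain ⟨h1, h2, h3⟩ := hI.2 p hp
      refine ⟨?_, ?_, ?_⟩
      · simp only [List.length_append]; omega
      · simp only [List.length_append]; omega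
      · rw [List.getElem?_append_left h1, List.getElem?_append_left h2]; exact h3
    · rw [hJ', List.mem_map] at hp
      obtain ⟨q, hq, rfl⟩ := hp
      obtain ⟨h1, h2, h3⟩ := hJ.2 q hq
      refine ⟨?_, ?_, ?_⟩
      · simp only [List.length_append]; omega
      · simp only [List.length_append]; omega
      · rw [List.getElem?_append_right (by omega : a.length ≤ q.1 + a.length),
          List.getElem?_append_right (by omega : b.length ≤ q.2 + b.length)]
        simpa using h3
  have hchain : (I ++ J').Chain' (fun p q => p.1 < q.1 ∧ p.2 < q.2) := by
    show List.IsChain _ (I ++ J')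
    rw [List.isChain_append]
    refine ⟨hI.1, ?_, ?_⟩
    · rw [hJ', List.isChain_map]
      exact hJ.1.imp (fun {p q} h => ⟨by omega, by omega⟩)
    · intro x hx y hy
      have hxI : x ∈ I := List.mem_of_mem_getLast? hx
      have hyJ : y ∈ J' := List.mem_of_mem_head? hy
      rw [hJ', List.mem_map] at hyJ
      obtain ⟨q, hq, rfl⟩ := hyJ
      have h1 := (hI.2 x hxI).1
      have h2 := (hI.2 x hxI).2.1
      exact ⟨by simp; omega, by simp; omega⟩
  have : (I ++ J').length ≤ maxMatch (a ++ c) (b ++ d) :=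
    IsMatch.le_maxMatch ⟨hchain, hmem⟩
  simp only [List.length_append, hJ', List.length_map] at this
  omega

lemma sum_maxMatch_le (xs ys : List (List σ)) (hlen : xs.length = ys.length) :
    ∑ k ∈ Finset.range xs.length, maxMatch (xs.getD k []) (ys.getD k []) ≤
      maxMatch xs.flatten ys.flatten := by
  induction xs generalizing ys with
  | nil => simp
  | cons x xs' ih =>
    cases ys with
    | nil => simp at hlen
    | cons y ys' =>
      simp only [List.length_cons] at hlen ⊢
      rw [Finset.sum_range_succ']
      simp only [List.getD_cons_succ, List.getD_cons_zero]
      calc (∑ k ∈ Finset.range xs'.length, maxMatch (xs'.getD k []) (ys'.getD k [])) +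
            maxMatch x y
          ≤ maxMatch xs'.flatten ys'.flatten + maxMatch x y := by
            exact Nat.add_le_add_right (ih ys' (by omega)) _
        _ = maxMatch x y + maxMatch xs'.flatten ys'.flatten := by omega
        _ ≤ maxMatch (x ++ xs'.flatten) (y ++ ys'.flatten) := maxMatch_append _ _ _ _
        _ = maxMatch (x :: xs').flatten (y :: ys').flatten := by
            rw [List.flatten_cons, List.flatten_cons]

lemma match_le_sum (xs ys : List (List σ)) (hlen : xs.length = ys.length)
    (I : List (ℕ × ℕ)) (hI : IsMatch xs.flatten ys.flatten I)
    (hblocks : ∀ p ∈ I, ∀ k,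
      (p.1 < ((xs.take k).flatten).length ↔ p.2 < ((ys.take k).flatten).length)) :
    I.length ≤ ∑ k ∈ Finset.range xs.length, maxMatch (xs.getD k []) (ys.getD k []) := by
  induction xs generalizing ys I with
  | nil =>
    cases I with
    | nil => simp
    | cons p I' =>
      exact absurd (hI.2 p List.mem_cons_self).1 (by simp)
  | cons x xs' ih =>
    cases ys with
    | nil => simp at hlen
    | cons y ys' =>
      simp only [List.length_cons] at hlen
      have hflat : (x :: xs').flatten = x ++ xs'.flatten := List.flatten_cons
      have hflat' : (y :: ys').flatten = y ++ ys'.flatten := List.flatten_cons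
      -- block splitting
      have hblock1 : ∀ p ∈ I, (p.1 < x.length ↔ p.2 < y.length) := by
        intro p hp
        have := hblocks p hp 1
        simpa using this
      set I1 := I.filter (fun p => decide (p.1 < x.length)) with hI1
      set I2 := I.filter (fun p => !decide (p.1 < x.length)) with hI2
      have hlensplit : I1.length + I2.length = I.length :=
        (List.filter_append_perm _ I).length_eq ▸ (List.length_append).symm
      -- I1 is a match between x and y
      have hI1match : IsMatch x y I1 := by
        refine isMatch_of_pairwise (hI.pairwise.sublist List.filter_sublist) ?_
        intro p hp
        rw [hI1, List.mem_filter] at hp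
        obtain ⟨hpI, hpx⟩ := hp
        have hpx' : p.1 < x.length := by simpa using hpx
        have hpy : p.2 < y.length := (hblock1 p hpI).mp hpx'
        obtain ⟨_, _, h3⟩ := hI.2 p hpI
        rw [hflat, hflat', List.getElem?_append_left hpx', List.getElem?_append_left hpy] at h3
        exact ⟨hpx', hpy, h3⟩
      -- I2 shifted is a match between xs'.flatten and ys'.flatten
      set I2' := I2.map (fun p => (p.1 - x.length, p.2 - y.length)) with hI2'
      have hI2mem : ∀ p ∈ I2, x.length ≤ p.1 ∧ y.length ≤ p.2 := by
        intro p hp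
        rw [hI2, List.mem_filter] at hp
        obtain ⟨hpI, hpx⟩ := hp
        have h1 : ¬ p.1 < x.length := by simpa using hpx
        have h2 : ¬ p.2 < y.length := fun h => h1 ((hblock1 p hpI).mpr h)
        omega
      have hI2sub : ∀ p ∈ I2, p ∈ I := fun p hp => List.mem_of_mem_filter hp
      have hI2'match : IsMatch xs'.flatten ys'.flatten I2' := by
        refine isMatch_of_pairwise ?_ ?_
        · rw [hI2', List.pairwise_map]
          have hpw2 : I2.Pairwise (fun p q => p.1 < q.1 ∧ p.2 < q.2) :=
            hI.pairwise.sublist List.filter_sublist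
          refine hpw2.imp_of_mem ?_
          intro p q hp hq hpq
          have h1 := hI2mem p hp
          have h2 := hI2mem q hq
          exact ⟨by omega, by omega⟩
        · intro p hp
          rw [hI2', List.mem_map] at hp
          obtain ⟨q, hq, rfl⟩ := hp
          obtain ⟨hq1, hq2⟩ := hI2mem q hq
          obtain ⟨h1, h2, h3⟩ := hI.2 q (hI2sub q hq)
          rw [hflat] at h1; rw [hflat'] at h2
          simp only [List.length_append] at h1 h2
          rw [hflat, hflat', List.getElem?_append_right hq1, List.getElem?_append_right hq2] at h3
          exact ⟨by omega, by omega, h3⟩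
      have hblocks2 : ∀ p ∈ I2', ∀ k,
          (p.1 < ((xs'.take k).flatten).length ↔ p.2 < ((ys'.take k).flatten).length) := by
        intro p hp k
        rw [hI2', List.mem_map] at hp
        obtain ⟨q, hq, rfl⟩ := hp
        obtain ⟨hq1, hq2⟩ := hI2mem q hq
        have := hblocks q (hI2sub q hq) (k + 1)
        simp only [List.take_succ_cons, List.flatten_cons, List.length_append] at this
        constructor
        · intro h; omega
        · intro h; omega
      have h2le := ih ys' (by omega) I2' hI2'match hblocks2
      have h1le := hI1match.le_maxMatch
      have hI2'len : I2'.length = I2.length := List.length_map _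
      rw [List.length_cons, Finset.sum_range_succ']
      simp only [List.getD_cons_succ, List.getD_cons_zero]
      omega

end Paper

namespace Paper
variable {σ : Type*}
open List

lemma flatten_length_eq (xs : List (List σ)) :
    (xs.flatten.length : ℝ) = ∑ k ∈ Finset.range xs.length, ((xs.getD k []).length : ℝ) := by
  induction xs with
  | nil => simp
  | cons x xs' ih =>
    rw [List.flatten_cons, List.length_cons, Finset.sum_range_succ']
    simp only [List.getD_cons_succ, List.getD_cons_zero, List.length_append]
    push_cast
    rw [ih]; ring

theorem statement2' {σ : Type*} (xs ys : List (List σ)) (hlen : xs.length = ys.length)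
    (hpos : 0 < xs.flatten.length + ys.flatten.length)
    (I : List (ℕ × ℕ)) (hI : IsMatch xs.flatten ys.flatten I)
    (hbest : I.length = maxMatch xs.flatten ys.flatten)
    (hblocks : ∀ p ∈ I, ∀ k,
      (p.1 < ((xs.take k).flatten).length ↔ p.2 < ((ys.take k).flatten).length)) :
    fbar xs.flatten ys.flatten =
      ∑ k ∈ Finset.range xs.length,
        fbar (xs.getD k []) (ys.getD k []) *
          (((xs.getD k []).length + (ys.getD k []).length : ℝ) /
            ((xs.flatten.length : ℝ) + ys.flatten.length)) := by
  classical
  have hM : maxMatch xs.flatten ys.flatten =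
      ∑ k ∈ Finset.range xs.length, maxMatch (xs.getD k []) (ys.getD k []) := by
    refine le_antisymm ?_ (sum_maxMatch_le xs ys hlen)
    rw [← hbest]
    exact match_le_sum xs ys hlen I hI hblocks
  set L : ℝ := (xs.flatten.length : ℝ) + ys.flatten.length with hLdef
  have hL : 0 < L := by
    rw [hLdef]
    have : (0 : ℝ) < ((xs.flatten.length + ys.flatten.length : ℕ) : ℝ) := by
      exact_mod_cast hpos
    push_cast at this
    linarith
  have hterm : ∀ k ∈ Finset.range xs.length,
      fbar (xs.getD k []) (ys.getD k []) *
        (((xs.getD k []).length + (ys.getD k []).length : ℝ) / L)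
      = ((xs.getD k []).length + (ys.getD k []).length : ℝ) / L
        - 2 * (maxMatch (xs.getD k []) (ys.getD k []) : ℝ) / L := by
    intro k _
    set a := xs.getD k [] with ha
    set b := ys.getD k [] with hb
    by_cases hc : ((a.length : ℝ) + b.length) = 0
    · have h0 : a.length + b.length = 0 := by exact_mod_cast hc
      have ha0 : a = [] := List.length_eq_zero_iff.mp (by omega)
      have hm0 : maxMatch a b = 0 := ha0 ▸ maxMatch_nil_left b
      rw [hc, hm0]
      simp
    · rw [fbar]
      have hLne : L ≠ 0 := hL.ne'
      field_simp
  rw [Finset.sum_congr rfl hterm, Finset.sum_sub_distrib, ← Finset.sum_div, ← Finset.sum_div]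
  have hsum1 : ∑ k ∈ Finset.range xs.length,
      ((xs.getD k []).length + (ys.getD k []).length : ℝ) = L := by
    rw [Finset.sum_add_distrib, ← flatten_length_eq xs, hlen, ← flatten_length_eq ys, hLdef]
  have hsum2 : ∑ k ∈ Finset.range xs.length,
      2 * (maxMatch (xs.getD k []) (ys.getD k []) : ℝ)
      = 2 * (maxMatch xs.flatten ys.flatten : ℝ) := by
    rw [← Finset.mul_sum, hM]
    push_cast
    ring
  rw [hsum1, hsum2, fbar, ← hLdef, div_self hL.ne']

end Paper

open Paper List

/-- Suppose `x = x_1 ⋯ x_n` and `y = y_1 ⋯ y_n` are decompositions of the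
(not both empty) strings `x` and `y` into `n` consecutive substrings, and there is a best
possible match between `x` and `y` in which every term of `x_i` that is matched is matched
with a term of `y_i` (expressed via prefix lengths: matched indices lie in the same block).
Then `f̄(x,y) = Σ_i f̄(x_i,y_i)·v_i` where `v_i = (|x_i|+|y_i|)/(|x|+|y|)`. -/
theorem statement2 {σ : Type*} (xs ys : List (List σ)) (hlen : xs.length = ys.length)
    (hpos : 0 < xs.flatten.length + ys.flatten.length)
    (I : List (ℕ × ℕ)) (hI : IsMatch xs.flatten ys.flatten I)
    (hbest : I.length = maxMatch xs.flatten ys.flatten)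
    (hblocks : ∀ p ∈ I, ∀ k,
      (p.1 < ((xs.take k).flatten).length ↔ p.2 < ((ys.take k).flatten).length)) :
    fbar xs.flatten ys.flatten =
      ∑ k ∈ Finset.range xs.length,
        fbar (xs.getD k []) (ys.getD k []) *
          (((xs.getD k []).length + (ys.getD k []).length : ℝ) /
            ((xs.flatten.length : ℝ) + ys.flatten.length)) := by
  exact Paper.statement2' xs ys hlen hpos I hI hbest hblocks
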